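/- Fix a commutative ring R and n : ℕ. Let C be the free R-module with basis {e_{i,j} | i, j ∈ Fin n, j ≤ i}, with coproduct Δ(e_{i,j}) = Σ_{k : j ≤ k ≤ i} e_{k,j} ⊗ e_{i,k}. Define the R-linear 'row shift' map m_r : C → C by m_r(e_{i,j}) = e_{i−1,j} if i > 0 and j ≤ i−1, and m_r(e_{i,j}) = 0 otherwise. Then (id_C ⊗ m_r) ∘ Δ = Δ ∘ m_r as maps C → C ⊗[R] C. -/

import Mathlib

open TensorProduct

/-- Pairs `(i, j)` with `j ≤ i` in `Fin n`: positions of lower triangular matrix entries. -/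
def LTIdx (n : ℕ) := {p : Fin n × Fin n // p.2 ≤ p.1}

noncomputable instance LTIdxTensorZero (R : Type*) [CommRing R] (n : ℕ) :
    Zero ((LTIdx n →₀ R) ⊗[R] (LTIdx n →₀ R)) :=
  @AddZero.toZero _ (@AddZeroClass.toAddZero _ inferInstance)

/-- Auxiliary total summand function. -/
noncomputable def gaux (R : Type*) [CommRing R] {n : ℕ} (j i' : Fin n) (k : Fin n) :
    (LTIdx n →₀ R) ⊗[R] (LTIdx n →₀ R) :=
  if hk : j ≤ k ∧ k ≤ i' then
    Finsupp.single (⟨(k, j), hk.1⟩ : LTIdx n) (1 : R) ⊗ₜ[R]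
      Finsupp.single (⟨(i', k), hk.2⟩ : LTIdx n) (1 : R)
  else @Zero.zero _ (@AddZero.toZero _ (@AddZeroClass.toAddZero _ inferInstance))

set_option maxHeartbeats 1000000 in
/-- First part of Proposition 2: the row shift `m_r(e_{i,j}) = e_{i-1,j}` (zero if the shifted
entry leaves the lower triangle) intertwines the incidence coproduct
`Δ(e_{i,j}) = Σ_{j ≤ k ≤ i} e_{k,j} ⊗ e_{i,k}` via `(id ⊗ m_r) ∘ Δ = Δ ∘ m_r`. -/
theorem row_shift_intertwines_coproduct
    (R : Type*) [CommRing R] (n : ℕ)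
    (Δ : (LTIdx n →₀ R) →ₗ[R] (LTIdx n →₀ R) ⊗[R] (LTIdx n →₀ R))
    (hΔ : ∀ s : LTIdx n,
      Δ (Finsupp.single s 1) =
        ∑ k ∈ (Finset.Icc s.1.2 s.1.1).attach,
          Finsupp.single (⟨(k.1, s.1.2), (Finset.mem_Icc.mp k.2).1⟩ : LTIdx n) (1 : R)
            ⊗ₜ[R]
          Finsupp.single (⟨(s.1.1, k.1), (Finset.mem_Icc.mp k.2).2⟩ : LTIdx n) (1 : R))
    (mr : (LTIdx n →₀ R) →ₗ[R] (LTIdx n →₀ R))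
    (hmr : ∀ s : LTIdx n,
      mr (Finsupp.single s 1) =
        if h : 0 < (s.1.1 : ℕ) ∧ (s.1.2 : ℕ) ≤ (s.1.1 : ℕ) - 1 then
          Finsupp.single
            (⟨(⟨(s.1.1 : ℕ) - 1, by have := s.1.1.isLt; omega⟩, s.1.2),
              by rw [Fin.le_def]; exact h.2⟩ : LTIdx n) (1 : R)
        else 0) :
    (TensorProduct.map LinearMap.id mr) ∘ₗ Δ = Δ ∘ₗ mr := by

  apply Finsupp.lhom_ext
  intro s r
  have hr : (Finsupp.single s r : LTIdx n →₀ R) = r • Finsupp.single s 1 := by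
    rw [Finsupp.smul_single, smul_eq_mul, mul_one]
  rw [hr, map_smul, map_smul]
  congr 1
  obtain ⟨⟨i, j⟩, hji⟩ := s
  simp only [LinearMap.comp_apply]
  rw [hΔ ⟨(i, j), hji⟩, hmr ⟨(i, j), hji⟩]
  erw [map_sum]
  dsimp only
  by_cases h : 0 < (i : ℕ) ∧ (j : ℕ) ≤ (i : ℕ) - 1
  · rw [dif_pos h]
    erw [hΔ]
    dsimp only
    have hn : (i : ℕ) - 1 < n := by have := i.isLt; omega
    have hrhs : (∑ k ∈ (Finset.Icc j (⟨(i:ℕ)-1, hn⟩ : Fin n)).attach,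
        Finsupp.single (⟨(k.1, j), (Finset.mem_Icc.mp k.2).1⟩ : LTIdx n) (1:R) ⊗ₜ[R]
        Finsupp.single (⟨((⟨(i:ℕ)-1, hn⟩ : Fin n), k.1), (Finset.mem_Icc.mp k.2).2⟩ : LTIdx n) (1:R))
        = ∑ k ∈ Finset.Icc j (⟨(i:ℕ)-1, hn⟩ : Fin n), gaux R j ⟨(i:ℕ)-1, hn⟩ k := by
      rw [← Finset.sum_attach (Finset.Icc j (⟨(i:ℕ)-1, hn⟩ : Fin n)) (gaux R j ⟨(i:ℕ)-1, hn⟩)]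
      refine Finset.sum_congr rfl fun k _ => ?_
      simp only [gaux]
      rw [dif_pos (Finset.mem_Icc.mp k.2)]
      rfl
    have hlhs : (∑ k ∈ (Finset.Icc j i).attach,
        (TensorProduct.map LinearMap.id mr)
          (Finsupp.single (⟨(k.1, j), (Finset.mem_Icc.mp k.2).1⟩ : LTIdx n) (1:R) ⊗ₜ[R]
           Finsupp.single (⟨(i, k.1), (Finset.mem_Icc.mp k.2).2⟩ : LTIdx n) (1:R)))
        = ∑ k ∈ Finset.Icc j i, gaux R j ⟨(i:ℕ)-1, hn⟩ k := by
      rw [← Finset.sum_attach (Finset.Icc j i) (gaux R j ⟨(i:ℕ)-1, hn⟩)]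
      refine Finset.sum_congr rfl fun k _ => ?_
      rw [TensorProduct.map_tmul, LinearMap.id_apply]
      erw [hmr]
      dsimp only
      simp only [gaux]
      by_cases hk' : ((k.1 : Fin n) : ℕ) ≤ (i : ℕ) - 1
      · rw [dif_pos (⟨h.1, hk'⟩ : 0 < (i:ℕ) ∧ ((k.1 : Fin n):ℕ) ≤ (i:ℕ) - 1)]
        rw [dif_pos (⟨(Finset.mem_Icc.mp k.2).1, Fin.le_def.mpr hk'⟩ :
          j ≤ (k.1 : Fin n) ∧ (k.1 : Fin n) ≤ (⟨(i:ℕ)-1, hn⟩ : Fin n))]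
        rfl
      · have hc1 : ¬(0 < (i:ℕ) ∧ ((k.1 : Fin n):ℕ) ≤ (i:ℕ) - 1) := fun hc => hk' hc.2
        have hc2 : ¬(j ≤ (k.1 : Fin n) ∧ (k.1 : Fin n) ≤ (⟨(i:ℕ)-1, hn⟩ : Fin n)) := by
          intro hc
          exact hk' (Fin.le_def.mp hc.2)
        rw [dif_neg hc1, dif_neg hc2]
        erw [TensorProduct.tmul_zero]
        rfl
    have hsub : ∑ k ∈ Finset.Icc j i, gaux R j ⟨(i:ℕ)-1, hn⟩ k
        = ∑ k ∈ Finset.Icc j (⟨(i:ℕ)-1, hn⟩ : Fin n), gaux R j ⟨(i:ℕ)-1, hn⟩ k := by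
      refine (Finset.sum_subset (fun k hk => ?_) (fun k hk hk' => ?_)).symm
      · rw [Finset.mem_Icc] at hk ⊢
        exact ⟨hk.1, le_trans hk.2 (by rw [Fin.le_def]; exact Nat.sub_le _ _)⟩
      · rw [Finset.mem_Icc] at hk hk'
        simp only [gaux]
        rw [dif_neg (fun hc => hk' ⟨hc.1, hc.2⟩)]
        rfl
    exact hlhs.trans (hsub.trans hrhs.symm)
  · rw [dif_neg h]
    erw [map_zero Δ]
    apply Finset.sum_eq_zero
    intro k _
    erw [TensorProduct.map_tmul]
    erw [hmr]
    dsimp only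
    have hk1 : (j : ℕ) ≤ ((k.1 : Fin n) : ℕ) := Fin.le_def.mp (Finset.mem_Icc.mp k.2).1
    have hk2 : ((k.1 : Fin n) : ℕ) ≤ (i : ℕ) := Fin.le_def.mp (Finset.mem_Icc.mp k.2).2
    have hc : ¬(0 < (i:ℕ) ∧ ((k.1 : Fin n):ℕ) ≤ (i:ℕ) - 1) := by omega
    rw [dif_neg hc]
    erw [TensorProduct.tmul_zero]
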